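/- In the group E_m^ν presented by generators x₁,…,x_m and a central element −1 of order 2 with relations xᵢ² = ν, xᵢxⱼ = xⱼxᵢ for |i−j| ≥ 2, and x_{i+1}xᵢ = −xᵢx_{i+1}, the center is {±1} when m is even, and {±1, ±x₁x₃⋯x_m} when m is odd. -/

import Mathlib

/-- Relators for the group `E_m^ν`: generators are `none` (the central element `-1`)
and `some i` (the generator `xᵢ`, 0-indexed); relations are `(-1)² = 1`, `-1` central,
`xᵢ² = ν`, far commutation `xᵢxⱼ = xⱼxᵢ` for `|i-j| ≥ 2`, and adjacent
anticommutation `x_{i+1}xᵢ = (-1)·xᵢx_{i+1}`. -/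
def Erel (m : ℕ) (ν : ℤˣ) : Set (FreeGroup (Option (Fin m))) :=
  {FreeGroup.of none ^ 2} ∪
    {r | ∃ i : Fin m, r = FreeGroup.of none * FreeGroup.of (some i) *
        (FreeGroup.of none)⁻¹ * (FreeGroup.of (some i))⁻¹} ∪
    {r | ∃ i : Fin m, r = FreeGroup.of (some i) ^ 2 *
        (if ν = 1 then 1 else FreeGroup.of none)⁻¹} ∪
    {r | ∃ i j : Fin m, (i : ℕ) + 2 ≤ (j : ℕ) ∧ r = FreeGroup.of (some i) *
        FreeGroup.of (some j) * (FreeGroup.of (some i))⁻¹ * (FreeGroup.of (some j))⁻¹} ∪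
    {r | ∃ i j : Fin m, (j : ℕ) = (i : ℕ) + 1 ∧ r = FreeGroup.of (some j) *
        FreeGroup.of (some i) *
        (FreeGroup.of none * FreeGroup.of (some i) * FreeGroup.of (some j))⁻¹}

/-- The group `E_m^ν`. -/
abbrev Egrp (m : ℕ) (ν : ℤˣ) := PresentedGroup (Erel m ν)

/-- The central element `-1` of `E_m^ν`. -/
def neg1 (m : ℕ) (ν : ℤˣ) : Egrp m ν := PresentedGroup.of none

/-- The generator `x_{i+1}` of `E_m^ν` (0-indexed: `xgen m ν i` is the paper's `x_{i+1}`). -/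
def xgen (m : ℕ) (ν : ℤˣ) (i : Fin m) : Egrp m ν := PresentedGroup.of (some i)

/-- The element `z = x₁x₃⋯` : the ordered product of the odd-indexed generators
(0-indexed: even positions). -/
def zel (m : ℕ) (ν : ℤˣ) : Egrp m ν :=
  ((List.finRange m).map fun (i : Fin m) => if (i : ℕ) % 2 = 0 then xgen m ν i else 1).prod

lemma z2_add_self (a : ZMod 2) : a + a = 0 := by revert a; decide
lemma z2_cases (a : ZMod 2) : a = 0 ∨ a = 1 := by revert a; decide

/-- `0` if `ν = 1`, `1` if `ν = -1`. -/
def dlt (ν : ℤˣ) : ZMod 2 := if ν = 1 then 0 else 1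

/-- shift a vector down by one (`shiftf v k = v (k+1)`). -/
def shiftf {m : ℕ} (v : Fin m → ZMod 2) : Fin m → ZMod 2 :=
  fun k => if h : (k : ℕ) + 1 < m then v ⟨(k : ℕ) + 1, h⟩ else 0

lemma shiftf_add {m : ℕ} (v w : Fin m → ZMod 2) :
    shiftf (v + w) = shiftf v + shiftf w := by
  funext k; simp only [shiftf, Pi.add_apply]
  split <;> simp

lemma shiftf_zero {m : ℕ} : shiftf (0 : Fin m → ZMod 2) = 0 := by
  funext k; simp only [shiftf]; split <;> simp

/-- The commutation bilinear form. -/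
def Bf (ν : ℤˣ) {m : ℕ} (v w : Fin m → ZMod 2) : ZMod 2 :=
  (∑ k, shiftf v k * w k) + dlt ν * ∑ k, v k * w k

lemma Bf_add_left (ν : ℤˣ) {m : ℕ} (v v' w : Fin m → ZMod 2) :
    Bf ν (v + v') w = Bf ν v w + Bf ν v' w := by
  simp only [Bf, shiftf_add, Pi.add_apply, add_mul, Finset.sum_add_distrib, mul_add]
  ring

lemma Bf_add_right (ν : ℤˣ) {m : ℕ} (v w w' : Fin m → ZMod 2) :
    Bf ν v (w + w') = Bf ν v w + Bf ν v w' := by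
  simp only [Bf, Pi.add_apply, mul_add, Finset.sum_add_distrib]
  ring

lemma Bf_zero_left (ν : ℤˣ) {m : ℕ} (w : Fin m → ZMod 2) : Bf ν 0 w = 0 := by
  simp [Bf, shiftf_zero]

lemma Bf_zero_right (ν : ℤˣ) {m : ℕ} (v : Fin m → ZMod 2) : Bf ν v 0 = 0 := by
  simp [Bf]

/-- The concrete model of `E_m^ν`. -/
@[ext] structure Gm (m : ℕ) (ν : ℤˣ) where
  s : ZMod 2
  v : Fin m → ZMod 2

namespace Gm
variable {m : ℕ} {ν : ℤˣ}

instance : Group (Gm m ν) where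
  mul a b := ⟨a.s + b.s + Bf ν a.v b.v, a.v + b.v⟩
  one := ⟨0, 0⟩
  inv a := ⟨a.s + Bf ν a.v a.v, a.v⟩
  mul_assoc a b c := by
    refine Gm.ext ?_ (add_assoc _ _ _)
    show a.s + b.s + Bf ν a.v b.v + c.s + Bf ν (a.v + b.v) c.v
        = a.s + (b.s + c.s + Bf ν b.v c.v) + Bf ν a.v (b.v + c.v)
    rw [Bf_add_left, Bf_add_right]; ring
  one_mul a := by
    refine Gm.ext ?_ (zero_add _)
    show 0 + a.s + Bf ν 0 a.v = a.s
    rw [Bf_zero_left]; ring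
  mul_one a := by
    refine Gm.ext ?_ (add_zero _)
    show a.s + 0 + Bf ν a.v 0 = a.s
    rw [Bf_zero_right]; ring
  inv_mul_cancel a := by
    refine Gm.ext ?_ ?_
    · show a.s + Bf ν a.v a.v + a.s + Bf ν a.v a.v = 0
      rw [show a.s + Bf ν a.v a.v + a.s + Bf ν a.v a.v
          = (a.s + a.s) + (Bf ν a.v a.v + Bf ν a.v a.v) by ring,
        z2_add_self, z2_add_self, add_zero]
    · show a.v + a.v = 0
      funext k; exact z2_add_self _

@[simp] lemma mul_s (a b : Gm m ν) : (a * b).s = a.s + b.s + Bf ν a.v b.v := rfl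
@[simp] lemma mul_v (a b : Gm m ν) : (a * b).v = a.v + b.v := rfl
@[simp] lemma one_s : (1 : Gm m ν).s = 0 := rfl
@[simp] lemma one_v : (1 : Gm m ν).v = 0 := rfl
@[simp] lemma inv_s (a : Gm m ν) : (a⁻¹).s = a.s + Bf ν a.v a.v := rfl
@[simp] lemma inv_v (a : Gm m ν) : (a⁻¹).v = a.v := rfl
@[simp] lemma mk_s (s : ZMod 2) (v : Fin m → ZMod 2) : (⟨s, v⟩ : Gm m ν).s = s := rfl
@[simp] lemma mk_v (s : ZMod 2) (v : Fin m → ZMod 2) : (⟨s, v⟩ : Gm m ν).v = v := rfl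

end Gm

section singles
variable {m : ℕ} {ν : ℤˣ}

lemma shiftf_single (i : Fin m) :
    shiftf (Pi.single i (1 : ZMod 2)) = fun k : Fin m => if (k : ℕ) + 1 = (i : ℕ) then (1 : ZMod 2) else 0 := by
  funext k
  simp only [shiftf]
  split
  · rename_i h
    rw [Pi.single_apply]
    congr 1
    simp [Fin.ext_iff, eq_comm]
  · rename_i h
    rw [if_neg]
    omega

lemma sum_single_mul {m : ℕ} (j : Fin m) (v : Fin m → ZMod 2) :
    (∑ k : Fin m, (Pi.single j 1 : Fin m → ZMod 2) k * v k) = v j := by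
  rw [Finset.sum_eq_single j]
  · simp
  · intro b _ hb; rw [Pi.single_apply, if_neg (by simpa [eq_comm] using hb)]; ring
  · simp

lemma sum_mul_single {m : ℕ} (j : Fin m) (v : Fin m → ZMod 2) :
    (∑ k : Fin m, v k * (Pi.single j 1 : Fin m → ZMod 2) k) = v j := by
  rw [Finset.sum_eq_single j]
  · simp
  · intro b _ hb; rw [Pi.single_apply, if_neg (by simpa [eq_comm] using hb)]; ring
  · simp

lemma Bf_single_right (v : Fin m → ZMod 2) (j : Fin m) :
    Bf ν v (Pi.single j 1) = shiftf v j + dlt ν * v j := by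
  simp only [Bf, sum_mul_single]

/-- the "predecessor" entry. -/
def predf {m : ℕ} (v : Fin m → ZMod 2) (i : Fin m) : ZMod 2 :=
  if h : 0 < (i : ℕ) then v ⟨(i : ℕ) - 1, by omega⟩ else 0

lemma Bf_single_left (i : Fin m) (v : Fin m → ZMod 2) :
    Bf ν (Pi.single i 1) v = predf v i + dlt ν * v i := by
  simp only [Bf, shiftf_single, sum_single_mul, predf]
  congr 1
  split
  · rename_i h
    rw [Finset.sum_eq_single (⟨(i : ℕ) - 1, by omega⟩ : Fin m)]
    · rw [if_pos (by simp; omega), one_mul]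
    · intro b _ hb
      rw [if_neg, zero_mul]
      intro hc
      apply hb
      apply Fin.ext
      simp only [Fin.val_mk]
      omega
    · simp
  · rename_i h
    rw [Finset.sum_eq_zero]
    intro k _
    rw [if_neg (by omega), zero_mul]

lemma Bf_single_single (i j : Fin m) :
    Bf ν (Pi.single i 1) (Pi.single j 1) =
      (if (i : ℕ) = (j : ℕ) + 1 then 1 else 0) + dlt ν * (if i = j then 1 else 0) := by
  rw [Bf_single_left, predf]
  congr 1
  · split
    · rename_i h
      rw [Pi.single_apply]
      congr 1
      simp [Fin.ext_iff]; omega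
    · rw [if_neg (by omega)]
  · rw [Pi.single_apply]

end singles

section phi
variable {m : ℕ} {ν : ℤˣ}

/-- generator images in the model. -/
def fgen (m : ℕ) (ν : ℤˣ) : Option (Fin m) → Gm m ν
  | none => ⟨1, 0⟩
  | some i => ⟨0, Pi.single i 1⟩
@[simp] lemma fgen_none : fgen m ν none = ⟨1, 0⟩ := rfl
@[simp] lemma fgen_some (i : Fin m) : fgen m ν (some i) = ⟨0, Pi.single i 1⟩ := rfl

lemma single_add_single (i : Fin m) :
    (Pi.single i 1 : Fin m → ZMod 2) + Pi.single i 1 = 0 :=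
  funext fun _ => z2_add_self _

lemma gm_eq_iff (a b : Gm m ν) : a = b ↔ a.s = b.s ∧ a.v = b.v :=
  ⟨fun h => by rw [h]; exact ⟨rfl, rfl⟩, fun ⟨h1, h2⟩ => Gm.ext h1 h2⟩

open scoped commutatorElement in
lemma relhold : ∀ r ∈ Erel m ν, FreeGroup.lift (fgen m ν) r = 1 := by
  intro r hr
  rcases hr with ((((h | h) | h) | h) | h)
  · -- (-1)^2
    rcases h with rfl
    rw [pow_two, map_mul, FreeGroup.lift_apply_of, gm_eq_iff]
    constructor
    · simp [Bf_zero_left]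
      decide
    · simp
  · -- -1 central
    obtain ⟨i, rfl⟩ := h
    simp only [map_mul, map_inv, FreeGroup.lift_apply_of, fgen_none, fgen_some]
    rw [gm_eq_iff]
    constructor
    · simp [Bf_zero_left, Bf_zero_right, Bf_add_left, Bf_add_right]
      have h4 : ∀ a : ZMod 2, 1 + 1 + a + a = 0 := by decide
      exact h4 _
    · funext k
      simp [z2_add_self]
  · -- squares
    obtain ⟨i, rfl⟩ := h
    rw [pow_two]
    simp only [map_mul, map_inv, FreeGroup.lift_apply_of, fgen_some]
    by_cases hv : ν = 1
    · rw [if_pos hv, map_one, inv_one, mul_one, gm_eq_iff]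
      constructor
      · simp [Bf_single_single, dlt, hv]
      · simp only [Gm.mul_v, Gm.one_v]
        funext k
        simp [z2_add_self]
    · rw [if_neg hv, FreeGroup.lift_apply_of, gm_eq_iff]
      constructor
      · simp only [fgen_none, Gm.mul_s, Gm.inv_s, Gm.one_s, Gm.mul_v, Gm.inv_v,
          Bf_single_single, Bf_zero_left, Bf_zero_right, single_add_single]
        rw [if_neg (by omega : ¬((i:ℕ) = (i:ℕ)+1))]
        simp [dlt, hv]
        decide
      · simp only [fgen_none, Gm.mul_v, Gm.inv_v, Gm.one_v, single_add_single]
        simp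
  · -- far commutation
    obtain ⟨i, j, hij, rfl⟩ := h
    simp only [map_mul, map_inv, FreeGroup.lift_apply_of, fgen_some]
    have h3 : ¬(i = j) := by intro h; rw [h] at hij; omega
    have hsym : Bf ν (Pi.single i 1) (Pi.single j 1) = Bf ν (Pi.single j 1) (Pi.single i 1) := by
      rw [Bf_single_single, Bf_single_single, if_neg (by omega : ¬((i:ℕ) = (j:ℕ)+1)),
        if_neg (by omega : ¬((j:ℕ) = (i:ℕ)+1)), if_neg h3, if_neg (fun h => h3 h.symm)]
    have hc : (⟨0, Pi.single i 1⟩ * ⟨0, Pi.single j 1⟩ : Gm m ν)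
        = ⟨0, Pi.single j 1⟩ * ⟨0, Pi.single i 1⟩ := by
      rw [gm_eq_iff]
      exact ⟨by simp [hsym], by simp [add_comm]⟩
    rw [show (⟨0, Pi.single i 1⟩ * ⟨0, Pi.single j 1⟩ * (⟨0, Pi.single i 1⟩ : Gm m ν)⁻¹ *
        (⟨0, Pi.single j 1⟩ : Gm m ν)⁻¹ : Gm m ν)
      = ⁅(⟨0, Pi.single i 1⟩ : Gm m ν), (⟨0, Pi.single j 1⟩ : Gm m ν)⁆ from rfl,
      commutatorElement_eq_one_iff_commute]
    exact hc
  · -- adjacent anticommutation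
    obtain ⟨i, j, hij, rfl⟩ := h
    simp only [map_mul, map_inv, FreeGroup.lift_apply_of, fgen_some, fgen_none]
    rw [mul_inv_eq_one, gm_eq_iff]
    constructor
    · simp only [Gm.mul_s, Gm.mul_v, Bf_single_single, Bf_zero_left]
      have h3 : ¬(i = j) := by intro h; rw [h] at hij; omega
      rw [if_neg (show ¬(j = i) from fun h => h3 h.symm), if_pos hij,
        show (0 : Fin m → ZMod 2) + Pi.single i 1 = (Pi.single i 1 : Fin m → ZMod 2) from
          zero_add _,
        Bf_single_single, if_neg (by omega : ¬((i:ℕ) = (j:ℕ)+1)), if_neg h3]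
      ring
    · simp only [Gm.mul_v]
      rw [zero_add, add_comm]

/-- The homomorphism from `E_m^ν` onto the model. -/
def phi (m : ℕ) (ν : ℤˣ) : Egrp m ν →* Gm m ν := PresentedGroup.toGroup relhold

@[simp] lemma phi_neg1 : phi m ν (neg1 m ν) = ⟨1, 0⟩ := PresentedGroup.toGroup.of relhold

@[simp] lemma phi_xgen (i : Fin m) : phi m ν (xgen m ν i) = ⟨0, Pi.single i 1⟩ :=
  PresentedGroup.toGroup.of relhold

end phi

section rels
variable {m : ℕ} {ν : ℤˣ}

lemma rel_one {r : FreeGroup (Option (Fin m))} (hr : r ∈ Erel m ν) :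
    PresentedGroup.mk (Erel m ν) r = 1 :=
  (QuotientGroup.eq_one_iff r).mpr (Subgroup.subset_normalClosure hr)

lemma R1 : neg1 m ν * neg1 m ν = 1 := by
  have h := rel_one (m := m) (ν := ν)
    (Set.mem_union_left _ (Set.mem_union_left _ (Set.mem_union_left _
      (Set.mem_union_left _ rfl))))
  rwa [map_pow, pow_two] at h

open scoped commutatorElement in
lemma R2 (i : Fin m) : neg1 m ν * xgen m ν i = xgen m ν i * neg1 m ν := by
  have h := rel_one (m := m) (ν := ν)
    (Set.mem_union_left _ (Set.mem_union_left _ (Set.mem_union_left _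
      (Set.mem_union_right _ ⟨i, rfl⟩))))
  simp only [map_mul, map_inv] at h
  rw [show (PresentedGroup.mk (Erel m ν) (FreeGroup.of none) *
      PresentedGroup.mk (Erel m ν) (FreeGroup.of (some i)) *
      (PresentedGroup.mk (Erel m ν) (FreeGroup.of none))⁻¹ *
      (PresentedGroup.mk (Erel m ν) (FreeGroup.of (some i)))⁻¹)
    = ⁅PresentedGroup.mk (Erel m ν) (FreeGroup.of none),
        PresentedGroup.mk (Erel m ν) (FreeGroup.of (some i))⁆ from rfl,
    commutatorElement_eq_one_iff_commute] at h
  exact h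

lemma R3 (i : Fin m) : xgen m ν i * xgen m ν i = if ν = 1 then 1 else neg1 m ν := by
  have h := rel_one (m := m) (ν := ν)
    (Set.mem_union_left _ (Set.mem_union_left _ (Set.mem_union_right _ ⟨i, rfl⟩)))
  rw [map_mul, map_inv, map_pow, pow_two, mul_inv_eq_one] at h
  by_cases hv : ν = 1
  · rw [if_pos hv] at h ⊢; rw [map_one] at h; exact h
  · rw [if_neg hv] at h ⊢; exact h

open scoped commutatorElement in
lemma R4 {i j : Fin m} (hij : (i : ℕ) + 2 ≤ (j : ℕ)) :
    xgen m ν i * xgen m ν j = xgen m ν j * xgen m ν i := by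
  have h := rel_one (m := m) (ν := ν)
    (Set.mem_union_left _ (Set.mem_union_right _ ⟨i, j, hij, rfl⟩))
  simp only [map_mul, map_inv] at h
  rw [show (PresentedGroup.mk (Erel m ν) (FreeGroup.of (some i)) *
      PresentedGroup.mk (Erel m ν) (FreeGroup.of (some j)) *
      (PresentedGroup.mk (Erel m ν) (FreeGroup.of (some i)))⁻¹ *
      (PresentedGroup.mk (Erel m ν) (FreeGroup.of (some j)))⁻¹)
    = ⁅PresentedGroup.mk (Erel m ν) (FreeGroup.of (some i)),
        PresentedGroup.mk (Erel m ν) (FreeGroup.of (some j))⁆ from rfl,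
    commutatorElement_eq_one_iff_commute] at h
  exact h

lemma R5 {i j : Fin m} (hij : (j : ℕ) = (i : ℕ) + 1) :
    xgen m ν j * xgen m ν i = neg1 m ν * xgen m ν i * xgen m ν j := by
  have h := rel_one (m := m) (ν := ν)
    (Set.mem_union_right _ ⟨i, j, hij, rfl⟩)
  rw [map_mul, map_inv, mul_inv_eq_one, map_mul, map_mul] at h
  exact h

end rels

section lists
variable {m : ℕ} {ν : ℤˣ}

/-- ordered product of generators selected by `v` along a list. -/
def Pl (m : ℕ) (ν : ℤˣ) (l : List (Fin m)) (v : Fin m → ZMod 2) : Egrp m ν :=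
  (l.map fun j => if v j = 1 then xgen m ν j else 1).prod

def Pv (m : ℕ) (ν : ℤˣ) (v : Fin m → ZMod 2) : Egrp m ν := Pl m ν (List.finRange m) v

@[simp] lemma Pl_nil (v : Fin m → ZMod 2) : Pl m ν [] v = 1 := rfl

lemma Pl_cons (j : Fin m) (l : List (Fin m)) (v : Fin m → ZMod 2) :
    Pl m ν (j :: l) v = (if v j = 1 then xgen m ν j else 1) * Pl m ν l v := by
  simp [Pl]

lemma Pl_append (l₁ l₂ : List (Fin m)) (v : Fin m → ZMod 2) :
    Pl m ν (l₁ ++ l₂) v = Pl m ν l₁ v * Pl m ν l₂ v := by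
  simp [Pl]

lemma Pl_congr {l : List (Fin m)} {v w : Fin m → ZMod 2} (h : ∀ j ∈ l, v j = w j) :
    Pl m ν l v = Pl m ν l w := by
  induction l with
  | nil => rfl
  | cons j l ih =>
    rw [Pl_cons, Pl_cons, h j (List.mem_cons_self),
      ih fun k hk => h k (List.mem_cons_of_mem _ hk)]

lemma commute_neg1_Pl (l : List (Fin m)) (v : Fin m → ZMod 2) :
    Commute (neg1 m ν) (Pl m ν l v) := by
  apply Commute.list_prod_right
  intro x hx
  obtain ⟨j, _, rfl⟩ := List.mem_map.mp hx
  by_cases hv : v j = 1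
  · rw [if_pos hv]; exact R2 j
  · rw [if_neg hv]; exact Commute.one_right _

lemma neg1_pow_add (a b : ZMod 2) :
    neg1 m ν ^ ((a + b).val) = neg1 m ν ^ a.val * neg1 m ν ^ b.val := by
  obtain ha | ha := z2_cases a <;> obtain hb | hb := z2_cases b <;> subst ha <;> subst hb
  · simp
  · rw [show ((0 + 1 : ZMod 2)).val = 1 by decide, show ((0 : ZMod 2)).val = 0 by decide,
      show ((1 : ZMod 2)).val = 1 by decide, pow_zero, one_mul]
  · rw [show ((1 + 0 : ZMod 2)).val = 1 by decide, show ((0 : ZMod 2)).val = 0 by decide,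
      show ((1 : ZMod 2)).val = 1 by decide, pow_zero, mul_one]
  · rw [show ((1 + 1 : ZMod 2)).val = 0 by decide, show ((1 : ZMod 2)).val = 1 by decide,
      pow_zero, pow_one, R1]

lemma R3' (i : Fin m) : xgen m ν i * xgen m ν i = neg1 m ν ^ ((dlt ν).val) := by
  rw [R3]
  by_cases hv : ν = 1
  · rw [if_pos hv, dlt, if_pos hv, show ((0 : ZMod 2)).val = 0 by decide, pow_zero]
  · rw [if_neg hv, dlt, if_neg hv, show ((1 : ZMod 2)).val = 1 by decide, pow_one]

/-- split `finRange` at `i`. -/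
lemma split_finRange (i : Fin m) :
    List.finRange m = ((List.finRange m).filter (fun j => j < i)) ++
      i :: ((List.finRange m).filter (fun j => i < j)) := by
  have hnd : (List.finRange m).Nodup := List.nodup_finRange m
  have hp := List.pairwise_lt_finRange m
  haveI : IsAntisymm (Fin m) (· < ·) :=
    ⟨fun a b h h' => absurd h' (not_lt.mpr h.le)⟩
  have hnd2 : (((List.finRange m).filter (fun j => j < i)) ++
      i :: ((List.finRange m).filter (fun j => i < j))).Nodup := by
    rw [List.nodup_append]
    refine ⟨hnd.filter _, ?_, ?_⟩
    · rw [List.nodup_cons]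
      refine ⟨?_, hnd.filter _⟩
      intro hc
      have := (List.mem_filter.mp hc).2
      simp at this
    · intro a ha b hb hab; subst hab
      have h1 := (List.mem_filter.mp ha).2
      simp only [decide_eq_true_eq] at h1
      rcases List.mem_cons.mp hb with rfl | hb
      · exact absurd h1 (lt_irrefl _)
      · have h2 := (List.mem_filter.mp hb).2
        simp only [decide_eq_true_eq] at h2
        exact absurd (h1.trans h2) (lt_irrefl _)
  refine List.Perm.eq_of_pairwise' hp ?_ ((List.perm_ext_iff_of_nodup hnd hnd2).mpr ?_)
  swap
  · intro a
    simp only [List.mem_finRange, List.mem_append, List.mem_cons, List.mem_filter,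
      decide_eq_true_eq, true_and, true_iff]
    rcases lt_trichotomy a i with h | h | h
    · exact Or.inl h
    · exact Or.inr (Or.inl h)
    · exact Or.inr (Or.inr h)
  · rw [List.pairwise_append]
    refine ⟨hp.filter _, ?_, ?_⟩
    · rw [List.pairwise_cons]
      exact ⟨fun j hj => by simpa using (List.mem_filter.mp hj).2, hp.filter _⟩
    · intro a ha b hb
      have h1 : a < i := by simpa using (List.mem_filter.mp ha).2
      rcases List.mem_cons.mp hb with rfl | hb
      · exact h1
      · exact h1.trans (by simpa using (List.mem_filter.mp hb).2)

/-- move `xᵢ` across a product of smaller generators. -/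
lemma move (i : Fin m) (v : Fin m → ZMod 2) (l : List (Fin m)) :
    (∀ j ∈ l, j < i) →
    xgen m ν i * Pl m ν l v
      = neg1 m ν ^ (l.countP fun j : Fin m => decide ((j : ℕ) + 1 = (i : ℕ) ∧ v j = 1)) *
          Pl m ν l v * xgen m ν i := by
  induction l with
  | nil => intro _; simp
  | cons j l ih =>
    intro h
    have hj : j < i := h j (List.mem_cons_self)
    have hl : ∀ k ∈ l, k < i := fun k hk => h k (List.mem_cons_of_mem _ hk)
    have hstep : xgen m ν i * (if v j = 1 then xgen m ν j else 1)
        = neg1 m ν ^ (if ((j : ℕ) + 1 = (i : ℕ) ∧ v j = 1) then 1 else 0) *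
            ((if v j = 1 then xgen m ν j else 1) * xgen m ν i) := by
      by_cases hv : v j = 1
      · rw [if_pos hv]
        by_cases hadj : (j : ℕ) + 1 = (i : ℕ)
        · rw [if_pos ⟨hadj, hv⟩, pow_one, ← mul_assoc]
          exact R5 hadj.symm
        · rw [if_neg (fun hc => hadj hc.1), pow_zero, one_mul]
          exact (R4 (by omega)).symm
      · rw [if_neg hv, if_neg (fun hc => hv hc.2), pow_zero]
        simp
    have hcomm : (if v j = 1 then xgen m ν j else 1) *
        neg1 m ν ^ (l.countP fun k : Fin m => decide ((k : ℕ) + 1 = (i : ℕ) ∧ v k = 1))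
        = neg1 m ν ^ (l.countP fun k : Fin m => decide ((k : ℕ) + 1 = (i : ℕ) ∧ v k = 1)) *
          (if v j = 1 then xgen m ν j else 1) := by
      by_cases hv : v j = 1
      · rw [if_pos hv]
        exact ((show Commute (xgen m ν j) (neg1 m ν) from (R2 j).symm).pow_right _).eq
      · rw [if_neg hv, one_mul, mul_one]
    rw [Pl_cons, ← mul_assoc, hstep, List.countP_cons, Nat.add_comm, pow_add]
    simp only [decide_eq_true_eq, mul_assoc]
    rw [ih hl]
    simp only [mul_assoc]
    rw [← mul_assoc (if v j = 1 then xgen m ν j else 1) (neg1 m ν ^ _), hcomm]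
    simp only [mul_assoc]
    rw [← mul_assoc, ← mul_assoc, ((Commute.refl (neg1 m ν)).pow_pow _ _).eq]
    simp only [mul_assoc]

lemma countP_unique {α : Type*} [DecidableEq α] (t : α) (p : α → Bool)
    (hp : ∀ j, p j = true ↔ j = t) :
    ∀ l : List α, l.Nodup → t ∈ l → l.countP p = 1 := by
  intro l
  induction l with
  | nil => intro _ h; exact absurd h (List.not_mem_nil)
  | cons a l ih =>
    intro hnd ht
    rw [List.countP_cons]
    rcases List.mem_cons.mp ht with rfl | ht
    · rw [if_pos ((hp _).mpr rfl), List.countP_eq_zero.mpr, Nat.zero_add]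
      intro b hb hpb
      rw [(hp b).mp hpb] at hb
      exact (List.nodup_cons.mp hnd).1 hb
    · have hat : a ≠ t := by
        rintro rfl
        exact (List.nodup_cons.mp hnd).1 ht
      rw [if_neg (fun hc => hat ((hp a).mp hc)), Nat.add_zero]
      exact ih (List.nodup_cons.mp hnd).2 ht

lemma countP_eval (i : Fin m) (v : Fin m → ZMod 2) :
    (((List.finRange m).filter (fun j => j < i)).countP
      fun j : Fin m => decide ((j : ℕ) + 1 = (i : ℕ) ∧ v j = 1))
    = (predf v i).val := by
  rw [List.countP_filter]
  rcases Nat.eq_zero_or_pos (i : ℕ) with h0 | h0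
  · rw [List.countP_eq_zero.mpr, predf, dif_neg (by omega)]
    · rfl
    · intro j _ hc
      simp only [Bool.and_eq_true, decide_eq_true_eq] at hc
      omega
  · set t : Fin m := ⟨(i : ℕ) - 1, by omega⟩ with ht
    rw [predf, dif_pos h0]
    by_cases hv : v t = 1
    · rw [hv, show ((1 : ZMod 2)).val = 1 by decide]
      refine countP_unique t _ ?_ _ (List.nodup_finRange m) (List.mem_finRange t)
      intro j
      simp only [Bool.and_eq_true, decide_eq_true_eq]
      constructor
      · rintro ⟨⟨hj1, _⟩, _⟩
        apply Fin.ext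
        rw [ht]
        simp only [Fin.val_mk]
        omega
      · rintro rfl
        refine ⟨⟨?_, hv⟩, ?_⟩
        · simp only [ht]; omega
        · rw [Fin.lt_def]; simp only [ht]; omega
    · have hv0 : v t = 0 := (z2_cases _).resolve_right hv
      rw [hv0, show ((0 : ZMod 2)).val = 0 by decide, List.countP_eq_zero.mpr]
      intro j _ hc
      simp only [Bool.and_eq_true, decide_eq_true_eq] at hc
      apply hv
      have : j = t := by
        apply Fin.ext
        rw [ht]
        simp only [Fin.val_mk]
        omega
      rw [← this]
      exact hc.1.2

/-- The key commutation lemma: push `xᵢ` into the normal-form product. -/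
lemma key (i : Fin m) (v : Fin m → ZMod 2) :
    xgen m ν i * Pv m ν v
      = neg1 m ν ^ (Bf ν (Pi.single i 1) v).val * Pv m ν (Pi.single i 1 + v) := by
  have hl₁ : ∀ j ∈ (List.finRange m).filter (fun j => j < i), j < i := by
    intro j hj
    simpa using (List.mem_filter.mp hj).2
  have hA : Pl m ν ((List.finRange m).filter (fun j => j < i)) (Pi.single i 1 + v)
      = Pl m ν ((List.finRange m).filter (fun j => j < i)) v := by
    apply Pl_congr
    intro j hj
    have : j ≠ i := ne_of_lt (hl₁ j hj)
    simp [Pi.single_apply, this]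
  have hC : Pl m ν ((List.finRange m).filter (fun j => i < j)) (Pi.single i 1 + v)
      = Pl m ν ((List.finRange m).filter (fun j => i < j)) v := by
    apply Pl_congr
    intro j hj
    have hij : i < j := by simpa using (List.mem_filter.mp hj).2
    have : j ≠ i := ne_of_gt hij
    simp [Pi.single_apply, this]
  rw [Pv, Pv, split_finRange i, Pl_append, Pl_append, Pl_cons, Pl_cons, hA, hC,
    Bf_single_left]
  rw [← mul_assoc, move i v _ hl₁, countP_eval]
  by_cases hv : v i = 1
  · have hvi' : ((Pi.single i 1 + v : Fin m → ZMod 2) i) = 0 := by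
      simp [hv, z2_add_self]
    rw [if_pos hv, if_neg (by rw [hvi']; decide), hv, mul_one, one_mul]
    simp only [mul_assoc]
    rw [← mul_assoc (xgen m ν i) (xgen m ν i), R3']
    rw [← mul_assoc (Pl m ν ((List.finRange m).filter (fun j => j < i)) v)
      (neg1 m ν ^ (dlt ν).val),
      ((commute_neg1_Pl ((List.finRange m).filter (fun j => j < i)) v).symm.pow_right
        ((dlt ν).val)).eq]
    simp only [mul_assoc]
    rw [← mul_assoc, ← pow_add, neg1_pow_add, ← pow_add]
  · have hv0 : v i = 0 := (z2_cases _).resolve_right hv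
    have hvi' : ((Pi.single i 1 + v : Fin m → ZMod 2) i) = 1 := by
      simp [hv0]
    rw [if_neg hv, if_pos hvi', hv0, mul_zero, add_zero, one_mul]
    simp only [mul_assoc]

end lists

section bij
variable {m : ℕ} {ν : ℤˣ}

lemma phi_Pl (l : List (Fin m)) (hl : l.Pairwise (· < ·)) (v : Fin m → ZMod 2) :
    phi m ν (Pl m ν l v) = ⟨0, fun k => if k ∈ l then v k else 0⟩ := by
  induction l with
  | nil =>
    rw [Pl_nil, map_one, gm_eq_iff]
    exact ⟨rfl, by funext k; simp⟩
  | cons i l ih =>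
    obtain ⟨h1, h2⟩ := List.pairwise_cons.mp hl
    rw [Pl_cons, map_mul, ih h2]
    have hnotmem : i ∉ l := fun hc => absurd (h1 i hc) (lt_irrefl _)
    have e2 : predf (fun k => if k ∈ l then v k else 0) i = 0 := by
      rw [predf]
      split
      · rename_i h0
        rw [if_neg]
        intro hc
        have := h1 _ hc
        rw [Fin.lt_def] at this
        simp only [Fin.val_mk] at this
        omega
      · rfl
    by_cases hv : v i = 1
    · rw [if_pos hv, phi_xgen, gm_eq_iff]
      constructor
      · simp only [Gm.mul_s, Gm.mk_s, Gm.mk_v]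
        rw [Bf_single_left, e2, if_neg hnotmem, mul_zero]
        simp
      · simp only [Gm.mul_v, Gm.mk_v]
        funext k
        by_cases hk : k = i
        · subst hk
          simp [hnotmem, hv, Pi.single_apply]
        · simp only [Pi.add_apply, Pi.single_apply, if_neg hk, List.mem_cons, zero_add]
          by_cases hkl : k ∈ l
          · rw [if_pos hkl, if_pos (Or.inr hkl)]
          · rw [if_neg hkl, if_neg (by rintro (rfl | hc); exact hk rfl; exact hkl hc)]
    · have hv0 : v i = 0 := (z2_cases _).resolve_right hv
      rw [if_neg hv, map_one, one_mul, gm_eq_iff]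
      refine ⟨rfl, ?_⟩
      funext k
      by_cases hk : k = i
      · subst hk
        simp [hnotmem, hv0]
      · simp only [List.mem_cons]
        by_cases hkl : k ∈ l
        · rw [if_pos hkl, if_pos (Or.inr hkl)]
        · rw [if_neg hkl, if_neg (by rintro (rfl | hc); exact hk rfl; exact hkl hc)]

lemma phi_Pv (v : Fin m → ZMod 2) : phi m ν (Pv m ν v) = ⟨0, v⟩ := by
  rw [Pv, phi_Pl _ (List.pairwise_lt_finRange m) v, gm_eq_iff]
  exact ⟨rfl, funext fun k => by simp⟩

lemma powGm (n : ℕ) : ((⟨1, 0⟩ : Gm m ν) ^ n) = ⟨(n : ZMod 2), 0⟩ := by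
  induction n with
  | zero => rw [pow_zero, gm_eq_iff]; exact ⟨by simp, rfl⟩
  | succ n ih =>
    rw [pow_succ, ih, gm_eq_iff]
    constructor
    · simp only [Gm.mul_s, Gm.mk_s, Gm.mk_v, Bf_zero_left]
      push_cast
      ring
    · simp only [Gm.mul_v, Gm.mk_v, add_zero]

/-- normal form section of `phi`. -/
def psi (m : ℕ) (ν : ℤˣ) (a : Gm m ν) : Egrp m ν :=
  neg1 m ν ^ (a.s).val * Pv m ν a.v

lemma phi_psi (a : Gm m ν) : phi m ν (psi m ν a) = a := by
  rw [psi, map_mul, map_pow, phi_neg1, phi_Pv, powGm, gm_eq_iff]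
  constructor
  · simp only [Gm.mul_s, Gm.mk_s, Gm.mk_v, Bf_zero_left, add_zero]
    obtain hs | hs := z2_cases a.s <;> rw [hs] <;> decide
  · simp only [Gm.mul_v, Gm.mk_v, zero_add]

lemma psi_one : psi m ν (1 : Gm m ν) = 1 := by
  rw [psi, Gm.one_s, Gm.one_v, show ((0 : ZMod 2)).val = 0 by decide, pow_zero, one_mul, Pv]
  apply List.prod_eq_one
  intro x hx
  obtain ⟨j, _, rfl⟩ := List.mem_map.mp hx
  rw [if_neg]
  intro hc
  rw [Pi.zero_apply] at hc
  exact absurd hc.symm (by decide : (1 : ZMod 2) ≠ 0)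

lemma psi_mul_left (t : Option (Fin m)) (a : Gm m ν) :
    psi m ν (fgen m ν t * a) = PresentedGroup.of t * psi m ν a := by
  cases t with
  | none =>
    rw [fgen_none, psi, psi, Gm.mul_s, Gm.mul_v, Gm.mk_s, Gm.mk_v, Bf_zero_left, add_zero,
      zero_add, neg1_pow_add, show ((1 : ZMod 2)).val = 1 by decide, pow_one, mul_assoc]
    rfl
  | some i =>
    rw [fgen_some, psi, psi, Gm.mul_s, Gm.mul_v, Gm.mk_s, Gm.mk_v, zero_add,
      neg1_pow_add, mul_assoc, ← key i a.v,
      ← mul_assoc, ← mul_assoc,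
      ((show Commute (neg1 m ν) (xgen m ν i) from R2 i).pow_left _).eq, mul_assoc]
    rw [← mul_assoc]
    rfl

lemma psi_phi (g : Egrp m ν) : psi m ν (phi m ν g) = g := by
  let H : Subgroup (Egrp m ν) :=
    { carrier := {g | ∀ a : Gm m ν, psi m ν (phi m ν g * a) = g * psi m ν a}
      one_mem' := by intro a; rw [map_one, one_mul, one_mul]
      mul_mem' := by
        intro x y hx hy a
        rw [map_mul, mul_assoc, hx (phi m ν y * a), hy a, ← mul_assoc]
      inv_mem' := by
        intro x hx a
        have h := hx ((phi m ν x)⁻¹ * a)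
        rw [← mul_assoc, mul_inv_cancel, one_mul] at h
        rw [map_inv, h, ← mul_assoc, inv_mul_cancel, one_mul] }
  have main : ∀ g : Egrp m ν, g ∈ H := by
    intro g
    refine PresentedGroup.generated_by _ H ?_ g
    intro j a
    rw [show phi m ν (PresentedGroup.of j) = fgen m ν j from
      PresentedGroup.toGroup.of relhold, psi_mul_left]
  have h := main g 1
  rw [mul_one, psi_one, mul_one] at h
  exact h

lemma phi_injective : Function.Injective (phi m ν) := by
  intro x y h
  rw [← psi_phi x, ← psi_phi y, h]

lemma phi_surjective : Function.Surjective (phi m ν) :=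
  fun a => ⟨psi m ν a, phi_psi a⟩

end bij

section center
variable {m : ℕ} {ν : ℤˣ}

/-- the vector of `z = x₁x₃⋯`. -/
def zfun (m : ℕ) : Fin m → ZMod 2 := fun j => if (j : ℕ) % 2 = 0 then 1 else 0

lemma predf_zero (j : Fin m) : predf (0 : Fin m → ZMod 2) j = 0 := by
  rw [predf]; split <;> rfl

lemma Bf_symm_of_singles {v : Fin m → ZMod 2}
    (h : ∀ j : Fin m, Bf ν v (Pi.single j 1) = Bf ν (Pi.single j 1) v) :
    ∀ w, Bf ν v w = Bf ν w v := by
  have hsingle : ∀ (j : Fin m) (c : ZMod 2),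
      Bf ν v (Pi.single j c) = Bf ν (Pi.single j c) v := by
    intro j c
    obtain hc | hc := z2_cases c
    · subst hc
      rw [Pi.single_zero, Bf_zero_left, Bf_zero_right]
    · subst hc
      exact h j
  have main : ∀ (S : Finset (Fin m)) (w : Fin m → ZMod 2),
      (∀ j ∉ S, w j = 0) → Bf ν v w = Bf ν w v := by
    intro S
    induction S using Finset.induction_on with
    | empty =>
      intro w hw
      have hw0 : w = 0 := funext fun k => hw k (Finset.notMem_empty k)
      rw [hw0, Bf_zero_left, Bf_zero_right]
    | @insert a S ha ih =>
      intro w hw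
      have hdecomp : w = Pi.single a (w a) + Function.update w a 0 := by
        funext k
        by_cases hk : k = a
        · subst hk; simp
        · simp [Pi.single_apply, hk, Function.update_of_ne hk]
      rw [hdecomp, Bf_add_right, Bf_add_left, hsingle, ih _ ?_]
      intro j hj
      by_cases hj' : j = a
      · subst hj'; simp
      · rw [Function.update_of_ne hj']
        exact hw j (by simp [hj']; exact fun hc => absurd hc hj)
  intro w
  exact main Finset.univ w (fun j hj => absurd (Finset.mem_univ j) hj)

lemma mem_center_Gm (a : Gm m ν) :
    a ∈ Subgroup.center (Gm m ν) ↔ ∀ j : Fin m, shiftf a.v j = predf a.v j := by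
  constructor
  · intro h j
    have hb := Subgroup.mem_center_iff.mp h ⟨0, Pi.single j 1⟩
    rw [gm_eq_iff] at hb
    have hs := hb.1
    simp only [Gm.mul_s, Gm.mk_s, Gm.mk_v, zero_add, add_zero] at hs
    have hs' : Bf ν (Pi.single j 1) a.v = Bf ν a.v (Pi.single j 1) :=
      add_left_cancel hs
    rw [Bf_single_left, Bf_single_right] at hs'
    exact (add_right_cancel hs'.symm)
  · intro h
    rw [Subgroup.mem_center_iff]
    intro b
    have hsingles : ∀ j : Fin m, Bf ν a.v (Pi.single j 1) = Bf ν (Pi.single j 1) a.v := by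
      intro j
      rw [Bf_single_left, Bf_single_right, h j]
    have hsym := Bf_symm_of_singles hsingles b.v
    rw [gm_eq_iff]
    constructor
    · simp only [Gm.mul_s]
      rw [hsym.symm]
      ring
    · simp only [Gm.mul_v]
      rw [add_comm]
  -- note: direction of hsym may need adjusting

lemma center_transfer (g : Egrp m ν) :
    g ∈ Subgroup.center (Egrp m ν) ↔ phi m ν g ∈ Subgroup.center (Gm m ν) := by
  constructor
  · intro hg
    rw [Subgroup.mem_center_iff]
    intro b
    obtain ⟨h, rfl⟩ := phi_surjective (m := m) (ν := ν) b
    rw [← map_mul, ← map_mul, Subgroup.mem_center_iff.mp hg h]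
  · intro hg
    rw [Subgroup.mem_center_iff]
    intro b
    apply phi_injective
    rw [map_mul, map_mul, Subgroup.mem_center_iff.mp hg (phi m ν b)]

lemma zfun_cond (hm : m % 2 = 1) (j : Fin m) :
    shiftf (zfun m) j = predf (zfun m) j := by
  have hj := j.2
  simp only [shiftf, predf, zfun]
  by_cases h1 : (j : ℕ) + 1 < m
  · rw [dif_pos h1]
    try simp only [Fin.val_mk]
    by_cases h0 : 0 < (j : ℕ)
    · rw [dif_pos h0]
      try simp only [Fin.val_mk]
      rw [if_congr (by omega : ((j : ℕ) + 1) % 2 = 0 ↔ ((j : ℕ) - 1) % 2 = 0) rfl rfl]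
    · rw [dif_neg h0, if_neg (by omega)]
  · rw [dif_neg h1]
    by_cases h0 : 0 < (j : ℕ)
    · rw [dif_pos h0]
      try simp only [Fin.val_mk]
      rw [if_neg (by omega)]
    · rw [dif_neg h0]

lemma classify (v : Fin m → ZMod 2) (h : ∀ j : Fin m, shiftf v j = predf v j) :
    v = 0 ∨ (m % 2 = 1 ∧ v = zfun m) := by
  rcases Nat.eq_zero_or_pos m with hm | hm
  · left; funext k; exact absurd k.2 (by omega)
  have hstep : ∀ k : ℕ, ∀ hk : k < m, v ⟨k, hk⟩ = if k % 2 = 0 then v ⟨0, hm⟩ else 0 := by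
    intro k
    induction k using Nat.strong_induction_on with
    | _ k ih =>
      intro hk
      match k, hk with
      | 0, hk => simp
      | 1, hk =>
        have h0 := h ⟨0, hm⟩
        simp only [shiftf, predf, Fin.val_mk] at h0
        rw [dif_pos (by omega : 0 + 1 < m), dif_neg (by omega)] at h0
        rw [if_neg (by omega)]
        exact h0
      | (k+2), hk =>
        have hk1 : k + 1 < m := by omega
        have hs := h ⟨k+1, hk1⟩
        simp only [shiftf, predf, Fin.val_mk] at hs
        rw [dif_pos (by omega : k + 1 + 1 < m), dif_pos (by omega : 0 < k + 1)] at hs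
        have hkk : (⟨k + 1 - 1, by omega⟩ : Fin m) = ⟨k, by omega⟩ := by
          apply Fin.ext; simp only [Fin.val_mk]; omega
        rw [hkk] at hs
        have := ih k (by omega) (by omega)
        rw [show (⟨k + 1 + 1, by omega⟩ : Fin m) = ⟨k + 2, hk⟩ from rfl] at hs
        rw [hs, this, if_congr (by omega : (k + 2) % 2 = 0 ↔ k % 2 = 0) rfl rfl]
  by_cases hv0 : v ⟨0, hm⟩ = 0
  · left
    funext k
    have hh := hstep k.1 k.2
    rw [Fin.eta] at hh
    rw [hh, Pi.zero_apply]
    split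
    · exact hv0
    · rfl
  · have hv1 : v ⟨0, hm⟩ = 1 := (z2_cases _).resolve_left hv0
    by_cases hme : m % 2 = 0
    · exfalso
      have hm2 : 2 ≤ m := by omega
      have hm1 : m - 1 < m := by omega
      have hl := h ⟨m - 1, hm1⟩
      simp only [shiftf, predf, Fin.val_mk] at hl
      rw [dif_neg (by omega), dif_pos (by omega : 0 < m - 1)] at hl
      have hkk : (⟨m - 1 - 1, by omega⟩ : Fin m) = ⟨m - 2, by omega⟩ := by
        apply Fin.ext; simp only [Fin.val_mk]; omega
      rw [hkk] at hl
      have h2 := hstep (m - 2) (by omega)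
      rw [if_pos (by omega), hv1] at h2
      rw [h2] at hl
      exact absurd hl.symm (by decide)
    · right
      refine ⟨by omega, ?_⟩
      funext k
      have hh := hstep k.1 k.2
      rw [Fin.eta] at hh
      rw [hh, zfun]
      split
      · exact hv1
      · rfl

lemma one_mk : (1 : Gm m ν) = ⟨0, 0⟩ := rfl

lemma zel_eq : zel m ν = Pv m ν (zfun m) := by
  rw [zel, Pv, Pl]
  congr 1
  apply List.map_congr_left
  intro i _
  by_cases hi : (i : ℕ) % 2 = 0
  · rw [if_pos hi, if_pos (by rw [zfun, if_pos hi])]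
  · rw [if_neg hi, if_neg]
    rw [zfun, if_neg hi]
    decide

lemma phi_zel : phi m ν (zel m ν) = ⟨0, zfun m⟩ := by
  rw [zel_eq, phi_Pv]

lemma phi_neg1_zel : phi m ν (neg1 m ν * zel m ν) = ⟨1, zfun m⟩ := by
  rw [map_mul, phi_neg1, phi_zel, gm_eq_iff]
  constructor
  · simp [Bf_zero_left]
  · simp

end center

section final
variable {m : ℕ} {ν : ℤˣ}

lemma cond_zero (j : Fin m) :
    shiftf (0 : Fin m → ZMod 2) j = predf (0 : Fin m → ZMod 2) j := by
  rw [shiftf_zero, predf_zero]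
  rfl

lemma central_of (g : Egrp m ν)
    (h : ∀ j : Fin m, shiftf (phi m ν g).v j = predf (phi m ν g).v j) :
    g ∈ Subgroup.center (Egrp m ν) :=
  (center_transfer g).mpr ((mem_center_Gm _).mpr h)

lemma phi_one : phi m ν (1 : Egrp m ν) = ⟨0, 0⟩ := by rw [map_one, one_mk]

end final

/-- the center of `E_m^ν` is `{±1}` for `m` even and
`{±1, ±x₁x₃⋯x_m}` for `m` odd. -/
theorem stmt12 (m : ℕ) (ν : ℤˣ) :
    (Subgroup.center (Egrp m ν) : Set (Egrp m ν)) =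
      if m % 2 = 0 then {1, neg1 m ν}
      else {1, neg1 m ν, zel m ν, neg1 m ν * zel m ν} := by
  by_cases hme : m % 2 = 0
  · rw [if_pos hme]
    ext g
    simp only [SetLike.mem_coe, Set.mem_insert_iff, Set.mem_singleton_iff]
    constructor
    · intro hg
      have hc := (mem_center_Gm _).mp ((center_transfer g).mp hg)
      rcases classify _ hc with hv | ⟨hodd, _⟩
      · obtain hs | hs := z2_cases (phi m ν g).s
        · left
          apply phi_injective
          rw [phi_one, gm_eq_iff]
          exact ⟨hs, hv⟩
        · right
          apply phi_injective
          rw [phi_neg1, gm_eq_iff]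
          exact ⟨hs, hv⟩
      · omega
    · rintro (rfl | rfl)
      · refine central_of _ ?_
        intro j
        rw [phi_one]
        exact cond_zero j
      · refine central_of _ ?_
        intro j
        rw [phi_neg1]
        exact cond_zero j
  · rw [if_neg hme]
    have hmo : m % 2 = 1 := by omega
    ext g
    simp only [SetLike.mem_coe, Set.mem_insert_iff, Set.mem_singleton_iff]
    constructor
    · intro hg
      have hc := (mem_center_Gm _).mp ((center_transfer g).mp hg)
      rcases classify _ hc with hv | ⟨_, hv⟩
      · obtain hs | hs := z2_cases (phi m ν g).s
        · left
          apply phi_injective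
          rw [phi_one, gm_eq_iff]
          exact ⟨hs, hv⟩
        · right; left
          apply phi_injective
          rw [phi_neg1, gm_eq_iff]
          exact ⟨hs, hv⟩
      · obtain hs | hs := z2_cases (phi m ν g).s
        · right; right; left
          apply phi_injective
          rw [phi_zel, gm_eq_iff]
          exact ⟨hs, hv⟩
        · right; right; right
          apply phi_injective
          rw [phi_neg1_zel, gm_eq_iff]
          exact ⟨hs, hv⟩
    · rintro (rfl | rfl | rfl | rfl)
      · refine central_of _ ?_
        intro j
        rw [phi_one]
        exact cond_zero j
      · refine central_of _ ?_
        intro j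
        rw [phi_neg1]
        exact cond_zero j
      · refine central_of _ ?_
        intro j
        rw [phi_zel]
        exact zfun_cond hmo j
      · refine central_of _ ?_
        intro j
        rw [phi_neg1_zel]
        exact zfun_cond hmo j
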